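/- For integers N > k ≥ 1, the combinatorial disjunctive constraint of SOS k(N), given by the collection S = {[i, i+k-1] : 1 ≤ i ≤ N-k+1} of intervals of k consecutive integers in [1, N], admits a junction tree: the path on vertex sequence S^1, S^2, ..., S^{N-k+1} (with S^i adjacent to S^{i+1}) is a junction tree of CDC(S). -/

import Mathlib

open SimpleGraph

/-- A junction tree for a labeled collection of finite index sets. -/
def IsJunctionTree {ι α : Type*} [DecidableEq α] (G : SimpleGraph ι)
    (f : ι → Finset α) : Prop :=
  G.IsTree ∧ ∀ (i j : ι) (p : G.Walk i j), p.IsPath →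
    (∀ x ∈ p.support, f i ∩ f j ⊆ f x) ∧
    (∀ a b : ι, s(a, b) ∈ p.edges → f i ∩ f j ⊆ f a ∩ f b)


section Aux

variable {n : ℕ} {G : SimpleGraph (Fin n)}

/-- Intermediate value property for walks in a graph whose edges join consecutive values. -/
lemma walk_mem_support_aux
    (hG : ∀ a b : Fin n, G.Adj a b → (a : ℕ) + 1 = b ∨ (b : ℕ) + 1 = a) :
    ∀ {a b : Fin n} (p : G.Walk a b) (m : Fin n),
      (((a : ℕ) ≤ m ∧ (m : ℕ) ≤ b) ∨ ((b : ℕ) ≤ m ∧ (m : ℕ) ≤ a)) → m ∈ p.support := by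
  intro a b p
  induction p with
  | nil =>
    intro m h1
    simp only [SimpleGraph.Walk.support_nil, List.mem_singleton]
    exact Fin.ext (by omega)
  | @cons a c b hadj q ih =>
    intro m h1
    by_cases hma : m = a
    · subst hma; simp
    · have hma' : (m : ℕ) ≠ (a : ℕ) := fun h => hma (Fin.ext h)
      have hac := hG a c hadj
      have hmem : m ∈ q.support := ih m (by omega)
      simp [hmem]

/-- Along a path, a vertex cannot occur that produces a duplicate. -/
lemma path_helper_aux
    (hG : ∀ a b : Fin n, G.Adj a b → (a : ℕ) + 1 = b ∨ (b : ℕ) + 1 = a)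
    {a b : Fin n} (p : G.Walk a b) (hp : p.IsPath) {x c : Fin n}
    (hx : x ∈ p.support)
    (h1 : ((a : ℕ) ≤ c ∧ (c : ℕ) ≤ x) ∨ ((x : ℕ) ≤ c ∧ (c : ℕ) ≤ a))
    (h2 : ((x : ℕ) ≤ c ∧ (c : ℕ) ≤ b) ∨ ((b : ℕ) ≤ c ∧ (c : ℕ) ≤ x))
    (hcx : c ≠ x) : False := by
  have hc1 := walk_mem_support_aux hG (p.takeUntil x hx) c h1
  have hc2 := walk_mem_support_aux hG (p.dropUntil x hx) c h2
  have hnd := hp.support_nodup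
  rw [← SimpleGraph.Walk.take_spec p hx, SimpleGraph.Walk.support_append,
    List.nodup_append] at hnd
  have hc2' : c ∈ (p.dropUntil x hx).support.tail := by
    rw [SimpleGraph.Walk.support_eq_cons] at hc2
    rcases List.mem_cons.mp hc2 with h | h
    · exact absurd h hcx
    · exact h
  exact hnd.2.2 c hc1 c hc2' rfl

/-- The support of a path is contained in the interval between its endpoints. -/
lemma path_support_bounded_aux
    (hG : ∀ a b : Fin n, G.Adj a b → (a : ℕ) + 1 = b ∨ (b : ℕ) + 1 = a)
    {a b : Fin n} (p : G.Walk a b) (hp : p.IsPath) :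
    ∀ x ∈ p.support, ((a : ℕ) ≤ x ∧ (x : ℕ) ≤ b) ∨ ((b : ℕ) ≤ x ∧ (x : ℕ) ≤ a) := by
  intro x hx
  by_contra h
  push_neg at h
  rcases le_total (a : ℕ) (b : ℕ) with hab | hab <;>
    rcases Nat.lt_or_ge (x : ℕ) (a : ℕ) with hxa | hxa <;>
    rcases Nat.lt_or_ge (x : ℕ) (b : ℕ) with hxb | hxb
  · exact path_helper_aux hG p hp hx (c := a) (by omega) (by omega) (Fin.ne_of_val_ne (by omega))
  · exact path_helper_aux hG p hp hx (c := a) (by omega) (by omega) (Fin.ne_of_val_ne (by omega))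
  · omega
  · exact path_helper_aux hG p hp hx (c := b) (by omega) (by omega) (Fin.ne_of_val_ne (by omega))
  · exact path_helper_aux hG p hp hx (c := b) (by omega) (by omega) (Fin.ne_of_val_ne (by omega))
  · omega
  · exact path_helper_aux hG p hp hx (c := b) (by omega) (by omega) (Fin.ne_of_val_ne (by omega))
  · exact path_helper_aux hG p hp hx (c := a) (by omega) (by omega) (Fin.ne_of_val_ne (by omega))

lemma reachable_aux
    (hG' : ∀ (a : Fin n) (h : (a : ℕ) + 1 < n), G.Adj a ⟨(a : ℕ) + 1, h⟩) :
    ∀ (d : ℕ) (a b : Fin n), (b : ℕ) = (a : ℕ) + d → G.Reachable a b := by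
  intro d
  induction d with
  | zero => intro a b h; exact (Fin.ext (by omega) : a = b) ▸ Reachable.refl a
  | succ d ih =>
    intro a b h
    have hlt : (a : ℕ) + 1 < n := by omega
    exact (G.adj_symm (hG' a hlt)).symm.reachable.trans (ih ⟨(a : ℕ) + 1, hlt⟩ b (by simp; omega))

end Aux

/-- For integers `N > k ≥ 1`, the CDC of `SOS k(N)`, given by the
collection of intervals `S^i = [i, i+k-1]` for `1 ≤ i ≤ N-k+1`, admits a junction
tree: the path on `S^1, S^2, ..., S^{N-k+1}` (with `S^i` adjacent to `S^{i+1}`)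
is a junction tree.  (Vertex `i : Fin (N-k+1)` is labeled with `[i+1, i+k]`.) -/
theorem sos_k_admits_junction_tree (N k : ℕ) (hk : 1 ≤ k) (hkN : k < N) :
    IsJunctionTree
      (SimpleGraph.fromRel (fun i j : Fin (N - k + 1) => (i : ℕ) + 1 = (j : ℕ)))
      (fun i : Fin (N - k + 1) => Finset.Icc ((i : ℕ) + 1) ((i : ℕ) + k)) := by
  set n := N - k + 1 with hn
  set G : SimpleGraph (Fin n) :=
    SimpleGraph.fromRel (fun i j : Fin n => (i : ℕ) + 1 = (j : ℕ)) with hGdef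
  have hG : ∀ a b : Fin n, G.Adj a b → (a : ℕ) + 1 = b ∨ (b : ℕ) + 1 = a := by
    intro a b hab
    rw [hGdef, SimpleGraph.fromRel_adj] at hab
    tauto
  have hG' : ∀ (a : Fin n) (h : (a : ℕ) + 1 < n), G.Adj a ⟨(a : ℕ) + 1, h⟩ := by
    intro a h
    rw [hGdef, SimpleGraph.fromRel_adj]
    exact ⟨Fin.ne_of_val_ne (by simp), Or.inl (by simp)⟩
  constructor
  · constructor
    · -- Connected
      constructor
      · intro a b
        rcases le_total (a : ℕ) (b : ℕ) with hab | hab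
        · exact reachable_aux hG' ((b : ℕ) - a) a b (by omega)
        · exact (reachable_aux hG' ((a : ℕ) - b) b a (by omega)).symm
    · -- Acyclic
      intro v c hc
      cases c with
      | nil => exact hc.ne_nil rfl
      | @cons _ w _ hadj q =>
        obtain ⟨hq, hedge⟩ := (SimpleGraph.Walk.cons_isCycle_iff q hadj).mp hc
        cases q with
        | nil => exact G.ne_of_adj hadj rfl
        | @cons _ u _ h' q' =>
          obtain ⟨hq', hwns⟩ := (SimpleGraph.Walk.cons_isPath_iff h' q').mp hq
          have huw : (u : ℕ) ≠ (w : ℕ) := fun h => G.ne_of_adj h' (Fin.ext h).symm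
          have hvw := hG v w hadj
          have hub := path_support_bounded_aux hG _ hq u (by simp)
          have huv : u = v := Fin.ext (by omega)
          subst huv
          cases q' with
          | nil =>
            apply hedge
            simp [Sym2.eq_swap]
          | @cons _ z _ h'' q'' =>
            obtain ⟨hq'', huns⟩ := (SimpleGraph.Walk.cons_isPath_iff h'' q'').mp hq'
            exact huns q''.end_mem_support
  · intro i j p hp
    have key : ∀ x ∈ p.support,
        (Finset.Icc ((i : ℕ) + 1) ((i : ℕ) + k)) ∩ (Finset.Icc ((j : ℕ) + 1) ((j : ℕ) + k)) ⊆
          Finset.Icc ((x : ℕ) + 1) ((x : ℕ) + k) := by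
      intro x hx y hy
      have hx12 := path_support_bounded_aux hG p hp x hx
      simp only [Finset.mem_inter, Finset.mem_Icc] at hy ⊢
      omega
    refine ⟨key, ?_⟩
    intro a b hab
    exact Finset.subset_inter (key a (p.fst_mem_support_of_mem_edges hab))
      (key b (p.snd_mem_support_of_mem_edges hab))
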